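/- In any (n+1)-valued Kripke model, for every world w, program α, and formulas φ, ψ: Val(w, [α]φ) ⊙ Val(w, ⟨α⟩ψ) ≤ Val(w, ⟨α⟩(φ ⊙ ψ)) ≤ Val(w, ⟨α⟩φ) ⊙ Val(w, ⟨α⟩ψ), where ⟨α⟩χ abbreviates ¬[α]¬χ and ⊙ is Łukasiewicz strong conjunction. -/

import Mathlib

noncomputable def lneg (x : ℝ) : ℝ := 1 - x
noncomputable def limp (x y : ℝ) : ℝ := min (1 - x + y) 1
noncomputable def lcon (x y : ℝ) : ℝ := max (x + y - 1) 0
noncomputable def ldis (x y : ℝ) : ℝ := min (x + y) 1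
noncomputable def lpow (x : ℝ) : ℕ → ℝ
  | 0 => 1
  | k+1 => lcon x (lpow x k)

/-- The finite Lukasiewicz chain Ln = {i/n : 0 <= i <= n} as a subset of R. -/
def Luk (n : ℕ) : Set ℝ := {x | ∃ i : ℕ, i ≤ n ∧ x = (i : ℝ) / n}

/-- Value of [a]phi at w: infimum of values at a-successors (empty inf = 1). -/
noncomputable def lbox {W : Type*} (R : W → W → Prop) (v : W → ℝ) (w : W) : ℝ :=
  sInf (insert 1 (v '' {u | R w u}))

/-- Value of <a>phi at w: supremum of values at a-successors (empty sup = 0). -/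
noncomputable def ldia {W : Type*} (R : W → W → Prop) (v : W → ℝ) (w : W) : ℝ :=
  sSup (insert 0 (v '' {u | R w u}))

lemma Luk_finite (n : ℕ) : (Luk n).Finite := by
  have : Luk n ⊆ (fun i : ℕ => (i : ℝ)/n) '' (Set.Iic n) := by
    rintro x ⟨i, hi, rfl⟩; exact ⟨i, hi, rfl⟩
  exact ((Set.finite_Iic n).image _).subset this

lemma Luk_mem_Icc {n : ℕ} (hn : 1 ≤ n) {x : ℝ} (hx : x ∈ Luk n) : 0 ≤ x ∧ x ≤ 1 := by
  obtain ⟨i, hi, rfl⟩ := hx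
  have hn' : (0:ℝ) < n := by exact_mod_cast hn
  constructor
  · positivity
  · rw [div_le_one hn']; exact_mod_cast hi

lemma lcon_mono {a b c d : ℝ} (h1 : a ≤ c) (h2 : b ≤ d) : lcon a b ≤ lcon c d := by
  unfold lcon; apply max_le_max _ le_rfl; linarith

lemma key_fin {W : Type*} (n : ℕ) (R : W → W → Prop) (v : W → ℝ)
    (hv : ∀ u, v u ∈ Luk n) (w : W) (c : ℝ) :
    (insert c (v '' {u | R w u})).Finite := by
  have : insert c (v '' {u | R w u}) ⊆ insert c (Luk n) := by
    rintro x (rfl | ⟨u, _, rfl⟩)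
    · exact Set.mem_insert _ _
    · exact Set.mem_insert_of_mem _ (hv u)
  exact ((Luk_finite n).insert c).subset this

theorem stmt13 {W : Type*} (n : ℕ) (hn : 1 ≤ n) (R : W → W → Prop)
    (f g : W → ℝ) (hf : ∀ u, f u ∈ Luk n) (hg : ∀ u, g u ∈ Luk n) (w : W) :
    lcon (lbox R f w) (ldia R g w) ≤ ldia R (fun u => lcon (f u) (g u)) w ∧
    ldia R (fun u => lcon (f u) (g u)) w ≤ lcon (ldia R f w) (ldia R g w) := by
  have hcon : ∀ u, lcon (f u) (g u) ∈ Luk n ∨ lcon (f u) (g u) = 0 := by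
    intro u
    rcases le_or_gt (f u + g u - 1) 0 with h | h
    · right; unfold lcon; exact max_eq_right h
    · left
      obtain ⟨i, hi, hfi⟩ := hf u
      obtain ⟨j, hj, hgj⟩ := hg u
      have hn' : (0:ℝ) < n := by exact_mod_cast hn
      have : lcon (f u) (g u) = ((i + j - n : ℕ) : ℝ)/n := by
        unfold lcon
        rw [max_eq_left h.le]
        have hle : n ≤ i + j := by
          by_contra hc
          push_neg at hc
          have : (i:ℝ) + j < n := by exact_mod_cast hc
          rw [hfi, hgj] at h
          have : (i:ℝ)/n + (j:ℝ)/n - 1 < 0 := by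
            rw [← add_div, sub_neg, div_lt_one hn']; linarith
          linarith
        rw [hfi, hgj, Nat.cast_sub hle]
        push_cast
        field_simp
      rw [this]
      exact ⟨i + j - n, by omega, rfl⟩
  -- finiteness facts
  have finf := key_fin n R f hf w 1
  have fing := key_fin n R g hg w 0
  have findf := key_fin n R f hf w 0
  have finc : (insert 0 ((fun u => lcon (f u) (g u)) '' {u | R w u})).Finite := by
    have : insert (0:ℝ) ((fun u => lcon (f u) (g u)) '' {u | R w u}) ⊆ insert 0 (Luk n) := by
      rintro x (rfl | ⟨u, _, rfl⟩)
      · exact Set.mem_insert _ _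
      · show lcon (f u) (g u) ∈ _
        rcases hcon u with h | h
        · exact Set.mem_insert_of_mem _ h
        · rw [h]; exact Set.mem_insert _ _
    exact ((Luk_finite n).insert 0).subset this
  have hbox_le_one : lbox R f w ≤ 1 :=
    csInf_le finf.bddBelow (Set.mem_insert _ _)
  have hbox_le : ∀ u, R w u → lbox R f w ≤ f u := fun u hu =>
    csInf_le finf.bddBelow (Set.mem_insert_of_mem _ ⟨u, hu, rfl⟩)
  have hdiaf_ge : ∀ u, R w u → f u ≤ ldia R f w := fun u hu =>
    le_csSup findf.bddAbove (Set.mem_insert_of_mem _ ⟨u, hu, rfl⟩)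
  have hdiag_ge : ∀ u, R w u → g u ≤ ldia R g w := fun u hu =>
    le_csSup fing.bddAbove (Set.mem_insert_of_mem _ ⟨u, hu, rfl⟩)
  have hc_ge : ∀ u, R w u → lcon (f u) (g u) ≤ ldia R (fun u => lcon (f u) (g u)) w :=
    fun u hu => le_csSup finc.bddAbove (Set.mem_insert_of_mem _ ⟨u, hu, rfl⟩)
  have hdiac_nonneg : 0 ≤ ldia R (fun u => lcon (f u) (g u)) w :=
    le_csSup finc.bddAbove (Set.mem_insert _ _)
  constructor
  · -- attainment of ldia R g w
    have hmem : ldia R g w ∈ insert 0 (g '' {u | R w u}) :=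
      (Set.insert_nonempty _ _).csSup_mem fing
    rcases hmem with h0 | ⟨u, hu, hu'⟩
    · rw [h0]
      calc lcon (lbox R f w) 0 ≤ lcon 1 0 := lcon_mono hbox_le_one le_rfl
        _ = 0 := by unfold lcon; simp
        _ ≤ _ := hdiac_nonneg
    · calc lcon (lbox R f w) (ldia R g w)
          = lcon (lbox R f w) (g u) := by rw [hu']
        _ ≤ lcon (f u) (g u) := lcon_mono (hbox_le u hu) le_rfl
        _ ≤ _ := hc_ge u hu
  · apply csSup_le (Set.insert_nonempty _ _)
    rintro x (rfl | ⟨u, hu, rfl⟩)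
    · unfold lcon; simp
    · exact lcon_mono (hdiaf_ge u hu) (hdiag_ge u hu)
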